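/- Suppose the response set is a finite product 𝓡 = ∏_{n=1}^N 𝓡_n and there exists a function f : 𝓡 → 𝓡 such that for every stimulus s with p(s) > 0 and every r̃ ∈ 𝓡, ∑_{r : f(r) = r̃} P(r|s) = P^ni(r̃|s). Then P(r|s) = P^ni(r|s) for all r and all s with p(s) > 0. (The noise-independent surrogate is never related to the actual responses through a reduced, i.e., deterministic, code unless the responses are already noise independent; this is the second part of Theorem 1.) -/

import Mathlib

open scoped BigOperators

/-- The `n`-th coordinate marginal `P_n(x|s)` of a conditional distribution on a
finite product response set. -/
noncomputable def coordMarginal {S : Type*} {N : ℕ} {R : Fin N → Type*}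
    [∀ n, Fintype (R n)] [∀ n, DecidableEq (R n)]
    (P : S → (∀ n, R n) → ℝ) (n : Fin N) (s : S) (x : R n) : ℝ :=
  ∑ r, if r n = x then P s r else 0

/-- The noise-independent surrogate `P^ni(r|s) = ∏_n P_n(r_n|s)`. -/
noncomputable def pNI {S : Type*} {N : ℕ} {R : Fin N → Type*}
    [∀ n, Fintype (R n)] [∀ n, DecidableEq (R n)]
    (P : S → (∀ n, R n) → ℝ) (s : S) (r : ∀ n, R n) : ℝ :=
  ∏ n, coordMarginal P n s (r n)

/- ### Auxiliary lemmas -/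

/-- Regrouping a sum along the fibers of a map `g`. -/
lemma regroup_map {α β : Type*} [Fintype α] [Fintype β] [DecidableEq β]
    (g : α → β) (Q : α → ℝ) (c : β → ℝ) :
    ∑ a, Q a * c (g a) = ∑ b, (∑ a, if g a = b then Q a else 0) * c b := by
  have : ∀ b, (∑ a, if g a = b then Q a else 0) * c b
      = ∑ a, if g a = b then Q a * c b else 0 := by
    intro b
    rw [Finset.sum_mul]
    exact Finset.sum_congr rfl fun a _ => by split <;> simp
  simp_rw [this]
  rw [Finset.sum_comm]
  refine Finset.sum_congr rfl fun a _ => ?_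
  rw [Finset.sum_ite_eq]
  simp

section aux

variable {S : Type*} {N : ℕ} {R : Fin N → Type*}
    [∀ n, Fintype (R n)] [∀ n, DecidableEq (R n)]

lemma coordMarginal_nonneg (P : S → (∀ n, R n) → ℝ) (hP0 : ∀ r, 0 ≤ P s r)
    (n : Fin N) (x : R n) : 0 ≤ coordMarginal P n s x := by
  refine Finset.sum_nonneg fun r _ => ?_
  split <;> simp [hP0 r]

lemma sum_coordMarginal (P : S → (∀ n, R n) → ℝ) (s : S) (n : Fin N) :
    ∑ x, coordMarginal P n s x = ∑ r, P s r := by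
  unfold coordMarginal
  rw [Finset.sum_comm]
  refine Finset.sum_congr rfl fun r _ => ?_
  rw [Finset.sum_ite_eq]
  simp

lemma le_coordMarginal (P : S → (∀ n, R n) → ℝ) {s : S} (hP0 : ∀ r, 0 ≤ P s r)
    (n : Fin N) (r : ∀ m, R m) : P s r ≤ coordMarginal P n s (r n) := by
  have := Finset.single_le_sum
    (f := fun r' : ∀ m, R m => if r' n = r n then P s r' else 0)
    (fun r' _ => by by_cases h : r' n = r n <;> simp [h, hP0 r']) (Finset.mem_univ r)
  simpa [coordMarginal] using this

lemma sum_pNI (P : S → (∀ n, R n) → ℝ) {s : S} (hP1 : ∑ r, P s r = 1) :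
    ∑ r, pNI P s r = 1 := by
  unfold pNI
  rw [← Fintype.piFinset_univ, ← Finset.prod_univ_sum]
  have : ∀ n : Fin N, ∑ x, coordMarginal P n s x = 1 := fun n => by
    rw [sum_coordMarginal, hP1]
  simp [this]

/-- The coordinate marginal of the surrogate `pNI` agrees with that of `P`. -/
lemma pNI_marginal (P : S → (∀ n, R n) → ℝ) {s : S} (hP1 : ∑ r, P s r = 1)
    (n : Fin N) (x : R n) :
    (∑ r, if r n = x then pNI P s r else 0) = coordMarginal P n s x := by
  classical
  have hmar : ∀ m : Fin N, ∑ y, coordMarginal P m s y = 1 := fun m => by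
    rw [sum_coordMarginal, hP1]
  set t : ∀ m, Finset (R m) := Function.update (fun m => (Finset.univ : Finset (R m))) n {x}
    with ht
  have hfil : (Finset.univ.filter (fun r : ∀ m, R m => r n = x)) = Fintype.piFinset t := by
    ext r
    simp only [Finset.mem_filter, Finset.mem_univ, true_and, Fintype.mem_piFinset]
    constructor
    · intro h m
      by_cases hm : m = n
      · subst hm; simp [ht, h]
      · simp [ht, Function.update_of_ne hm]
    · intro h
      have := h n
      simpa [ht] using this
  calc (∑ r, if r n = x then pNI P s r else 0)
      = ∑ r ∈ Finset.univ.filter (fun r : ∀ m, R m => r n = x), pNI P s r := by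
        rw [Finset.sum_filter]
    _ = ∑ r ∈ Fintype.piFinset t, ∏ m, coordMarginal P m s (r m) := by
        rw [hfil]; rfl
    _ = ∏ m, ∑ y ∈ t m, coordMarginal P m s y := (Finset.prod_univ_sum t _).symm
    _ = coordMarginal P n s x := by
        rw [Finset.prod_eq_single n]
        · simp [ht]
        · intro m _ hm
          rw [ht]
          simp only [Function.update_of_ne hm]
          exact hmar m
        · simp

end aux

/-- If a deterministic function `f : 𝓡 → 𝓡` pushes `P(·|s)` forward
to the noise-independent surrogate `P^ni(·|s)` for every stimulus with positive
prior, then `P(·|s)` already equals `P^ni(·|s)` for every such stimulus. -/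
theorem reduced_code_to_noise_independent_forces_independence
    {S : Type*} [Fintype S] {N : ℕ} (R : Fin N → Type*)
    [∀ n, Fintype (R n)] [∀ n, DecidableEq (R n)]
    (p : S → ℝ) (hp0 : ∀ s, 0 ≤ p s) (hp1 : ∑ s, p s = 1)
    (P : S → (∀ n, R n) → ℝ) (hP0 : ∀ s r, 0 ≤ P s r)
    (hP1 : ∀ s, ∑ r, P s r = 1)
    (f : (∀ n, R n) → (∀ n, R n))
    (hf : ∀ s, 0 < p s → ∀ rt, (∑ r, if f r = rt then P s r else 0) = pNI P s rt) :
    ∀ s, 0 < p s → ∀ r, P s r = pNI P s r := by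
  intro s hs
  classical
  set Q : (∀ n, R n) → ℝ := P s with hQ
  set QNI : (∀ n, R n) → ℝ := pNI P s with hQNI
  have hQ0 : ∀ r, 0 ≤ Q r := hP0 s
  have hQn0 : ∀ (n : Fin N) (x : R n), 0 ≤ coordMarginal P n s x :=
    fun n x => coordMarginal_nonneg P hQ0 n x
  have hQNI0 : ∀ r, 0 ≤ QNI r := fun r =>
    Finset.prod_nonneg fun n _ => hQn0 n (r n)
  have hle : ∀ (r : ∀ n, R n) (n : Fin N), Q r ≤ coordMarginal P n s (r n) :=
    fun r n => le_coordMarginal P hQ0 n r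
  -- positivity of QNI where Q is positive
  have hQNIpos : ∀ r, 0 < Q r → 0 < QNI r := by
    intro r hr
    exact Finset.prod_pos fun n _ => lt_of_lt_of_le hr (hle r n)
  -- Q r ≤ QNI (f r)
  have hleF : ∀ r, Q r ≤ QNI (f r) := by
    intro r
    have h1 : Q r ≤ ∑ r', if f r' = f r then Q r' else 0 := by
      have := Finset.single_le_sum
        (f := fun r' : ∀ n, R n => if f r' = f r then Q r' else 0)
        (fun r' _ => by by_cases h : f r' = f r <;> simp [h, hQ0 r']) (Finset.mem_univ r)
      simpa using this
    calc Q r ≤ ∑ r', if f r' = f r then Q r' else 0 := h1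
      _ = QNI (f r) := hf s hs (f r)
  -- entropy-type sums
  set M : ℝ := ∑ n, ∑ x, coordMarginal P n s x * Real.log (coordMarginal P n s x) with hM
  -- pointwise log of product
  have hlogprod : ∀ r, QNI r ≠ 0 →
      Real.log (QNI r) = ∑ n, Real.log (coordMarginal P n s (r n)) := by
    intro r hr
    refine Real.log_prod fun n _ => ?_
    intro h0
    have hz : (∏ m, coordMarginal P m s (r m)) = 0 :=
      Finset.prod_eq_zero (Finset.mem_univ n) h0
    exact hr (by simpa [hQNI, pNI] using hz)
  -- generic lemma: for Q' with coordinate marginals equal to those of P s,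
  -- ∑ r, Q' r * log (QNI r) = M
  have key : ∀ Q' : (∀ n, R n) → ℝ,
      (∀ r, Q' r ≠ 0 → QNI r ≠ 0) →
      (∀ (n : Fin N) (x : R n),
        (∑ r, if r n = x then Q' r else 0) = coordMarginal P n s x) →
      ∑ r, Q' r * Real.log (QNI r) = M := by
    intro Q' hne hmar
    have step1 : ∑ r, Q' r * Real.log (QNI r)
        = ∑ r, ∑ n, Q' r * Real.log (coordMarginal P n s (r n)) := by
      refine Finset.sum_congr rfl fun r _ => ?_
      by_cases h : Q' r = 0
      · simp [h]
      · rw [hlogprod r (hne r h), Finset.mul_sum]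
    rw [step1, Finset.sum_comm, hM]
    refine Finset.sum_congr rfl fun n _ => ?_
    rw [regroup_map (fun r : ∀ m, R m => r n) Q'
      (fun x => Real.log (coordMarginal P n s x))]
    exact Finset.sum_congr rfl fun x _ => by rw [hmar n x]
  have hB : ∑ r, Q r * Real.log (QNI r) = M := by
    refine key Q (fun r hr => ?_) (fun n x => rfl)
    have : 0 < Q r := lt_of_le_of_ne (hQ0 r) (Ne.symm hr)
    exact ne_of_gt (hQNIpos r this)
  have hC : ∑ r, QNI r * Real.log (QNI r) = M := by
    refine key QNI (fun r hr => hr) (fun n x => pNI_marginal P (hP1 s) n x)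
  -- A ≤ C
  have hAC : ∑ r, Q r * Real.log (Q r) ≤ M := by
    have step1 : ∑ r, Q r * Real.log (Q r) ≤ ∑ r, Q r * Real.log (QNI (f r)) := by
      refine Finset.sum_le_sum fun r _ => ?_
      rcases eq_or_lt_of_le (hQ0 r) with h | h
      · simp [← h]
      · exact mul_le_mul_of_nonneg_left
          (Real.log_le_log (by linarith) (hleF r)) (le_of_lt h)
    have step2 : ∑ r, Q r * Real.log (QNI (f r))
        = ∑ rt, QNI rt * Real.log (QNI rt) := by
      rw [regroup_map f Q (fun rt => Real.log (QNI rt))]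
      exact Finset.sum_congr rfl fun rt _ => by rw [hf s hs rt]
    calc ∑ r, Q r * Real.log (Q r) ≤ ∑ r, Q r * Real.log (QNI (f r)) := step1
      _ = ∑ rt, QNI rt * Real.log (QNI rt) := step2
      _ = M := hC
  -- the Gibbs terms
  set term : (∀ n, R n) → ℝ :=
    fun r => QNI r - Q r - (Q r * Real.log (QNI r) - Q r * Real.log (Q r)) with hterm
  have hterm_nonneg : ∀ r, 0 ≤ term r := by
    intro r
    rcases eq_or_lt_of_le (hQ0 r) with h | h
    · simp [hterm, ← h, hQNI0 r]
    · have hni : 0 < QNI r := hQNIpos r h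
      have hdiv : 0 < QNI r / Q r := div_pos hni h
      have hlog : Real.log (QNI r / Q r) ≤ QNI r / Q r - 1 :=
        Real.log_le_sub_one_of_pos hdiv
      have hld : Real.log (QNI r / Q r) = Real.log (QNI r) - Real.log (Q r) :=
        Real.log_div (ne_of_gt hni) (ne_of_gt h)
      have := mul_le_mul_of_nonneg_left hlog (le_of_lt h)
      rw [hld] at this
      have hq : Q r * (QNI r / Q r - 1) = QNI r - Q r := by
        field_simp
      rw [hq] at this
      simp only [hterm, mul_sub] at *
      linarith
  have hsum_term : ∑ r, term r = 0 := by
    have hsum : ∑ r, term r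
        = (∑ r, QNI r) - (∑ r, Q r) - ((∑ r, Q r * Real.log (QNI r))
          - ∑ r, Q r * Real.log (Q r)) := by
      simp [hterm, Finset.sum_sub_distrib]
    have h1 : ∑ r, QNI r = 1 := sum_pNI P (hP1 s)
    have h2 : ∑ r, Q r = 1 := hP1 s
    have hle0 : ∑ r, term r ≤ 0 := by
      rw [hsum, h1, h2, hB]
      linarith [hAC]
    have hge0 : 0 ≤ ∑ r, term r := Finset.sum_nonneg fun r _ => hterm_nonneg r
    linarith
  have hzero : ∀ r, term r = 0 := by
    intro r
    exact (Finset.sum_eq_zero_iff_of_nonneg (fun r _ => hterm_nonneg r)).mp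
      hsum_term r (Finset.mem_univ r)
  -- conclude
  intro r
  rcases eq_or_lt_of_le (hQ0 r) with h | h
  · -- Q r = 0, term r = QNI r = 0
    have := hzero r
    simp [hterm, ← h] at this
    rw [← h, hQNI] at *
    linarith
  · by_contra hne
    have hni : 0 < QNI r := hQNIpos r h
    have hdiv : 0 < QNI r / Q r := div_pos hni h
    have hne1 : QNI r / Q r ≠ 1 := by
      intro h1
      exact hne ((div_eq_one_iff_eq (ne_of_gt h)).mp h1).symm
    have hlog : Real.log (QNI r / Q r) < QNI r / Q r - 1 :=
      Real.log_lt_sub_one_of_pos hdiv hne1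
    have hld : Real.log (QNI r / Q r) = Real.log (QNI r) - Real.log (Q r) :=
      Real.log_div (ne_of_gt hni) (ne_of_gt h)
    have hmul := mul_lt_mul_of_pos_left hlog h
    rw [hld] at hmul
    have hq : Q r * (QNI r / Q r - 1) = QNI r - Q r := by
      field_simp
    rw [hq] at hmul
    have := hzero r
    simp only [hterm, mul_sub] at this hmul
    linarith
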